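/- arXiv:2103.14861 — 5 statements merged into one kernel-verified Lean document; each statement's English description precedes it below -/
import Mathlib

section
/- In the continued fraction expansion of √N with complete quotients (√N + c_n)/r_n, for all n ≥ 1 one has a_0 - c_n < r_n ≤ 2·a_0, where a_0 = ⌊√N⌋; moreover c_n ≤ a_0 and a_n ≤ 2·a_0 for all n ≥ 1. -/
theorem stmt_6
(N : ℕ) (hN : 0 < N) (hns : ¬ IsSquare N)
    (a c r : ℕ → ℤ)
    (ha0 : a 0 = (Nat.sqrt N : ℤ)) (hc0 : c 0 = a 0) (hr0 : r 0 = (N : ℤ) - a 0 ^ 2)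
    (ha : ∀ m, a (m + 1) = (a 0 + c m).fdiv (r m))
    (hc : ∀ m, c (m + 1) = a (m + 1) * r m - c m)
    (hr : ∀ m, r (m + 1) = ((N : ℤ) - c (m + 1) ^ 2).fdiv (r m)) :
    ∀ n, 1 ≤ n → a 0 - c n < r n ∧ r n ≤ 2 * a 0 ∧ c n ≤ a 0 ∧ a n ≤ 2 * a 0 := by
  -- basic facts about a 0 = ⌊√N⌋
  have hsq_le : ((Nat.sqrt N : ℤ))^2 ≤ (N : ℤ) := by
    exact_mod_cast Nat.sqrt_le' N
  have hne : ((Nat.sqrt N : ℤ))^2 ≠ (N : ℤ) := by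
    intro h
    apply hns
    refine ⟨Nat.sqrt N, ?_⟩
    have h2 : ((Nat.sqrt N : ℤ)) * (Nat.sqrt N : ℤ) = (N : ℤ) := by nlinarith [h]
    exact_mod_cast h2.symm
  have ha0N : (a 0)^2 < (N : ℤ) := by
    rw [ha0]; exact lt_of_le_of_ne hsq_le hne
  have hNa0 : (N : ℤ) ≤ (a 0)^2 + 2 * a 0 := by
    have h := Nat.lt_succ_sqrt' N
    have h2 : (N : ℤ) < ((Nat.sqrt N : ℤ) + 1) ^ 2 := by exact_mod_cast h
    rw [ha0]; nlinarith [h2]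
  have ha0pos : 0 < a 0 := by
    rw [ha0]
    have : 0 < Nat.sqrt N := by
      rw [Nat.sqrt_pos]; exact hN
    exact_mod_cast this
  -- the invariant
  have I : ∀ n, 0 < c n ∧ c n ≤ a 0 ∧ 0 < r n ∧ r n ∣ ((N : ℤ) - (c n)^2) ∧
      a 0 - c n < r n ∧ r n - c n ≤ a 0 := by
    intro n
    induction n with
    | zero =>
      refine ⟨by rw [hc0]; exact ha0pos, by rw [hc0], ?_, ?_, ?_, ?_⟩
      · rw [hr0]; linarith
      · rw [hr0, hc0]
      · rw [hr0, hc0]; linarith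
      · rw [hr0, hc0]; linarith
    | succ m ih =>
      obtain ⟨hcm_pos, hcm_le, hrm_pos, hdvd, h5, h6⟩ := ih
      have hqdef : a (m + 1) = (a 0 + c m) / r m := by
        rw [ha m, Int.fdiv_eq_ediv_of_nonneg _ hrm_pos.le]
      obtain ⟨s, hs0, hs1, hcm1, hse⟩ :
          ∃ s : ℤ, 0 ≤ s ∧ s < r m ∧ c (m + 1) = a 0 - s ∧
            s = a 0 + c m - a (m + 1) * r m := by
        refine ⟨(a 0 + c m) % r m, Int.emod_nonneg _ hrm_pos.ne',
          Int.emod_lt_of_pos _ hrm_pos, ?_, ?_⟩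
        · rw [hc m, hqdef, Int.emod_def]; ring
        · rw [hqdef, Int.emod_def]; ring
      have hq1 : 1 ≤ a (m + 1) := by
        rw [hqdef]
        rw [Int.le_ediv_iff_mul_le hrm_pos]
        linarith
      have hs2 : s ≤ a 0 + c m - r m := by
        have hmul : 1 * r m ≤ a (m + 1) * r m :=
          mul_le_mul_of_nonneg_right hq1 hrm_pos.le
        linarith
      have hs3 : r m + s ≤ 2 * a 0 := by linarith
      have hcm1_lb : 1 - a 0 ≤ c (m + 1) := by
        rw [hcm1]; linarith
      have hcm1_ub : c (m + 1) ≤ a 0 := by rw [hcm1]; linarith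
      have hsqle : (c (m + 1))^2 ≤ (a 0)^2 := by
        apply sq_le_sq'
        · linarith
        · exact hcm1_ub
      have hpos : 0 < (N : ℤ) - (c (m + 1))^2 := by linarith
      have hdvd' : r m ∣ (N : ℤ) - (c (m + 1))^2 := by
        have key : (N : ℤ) - (c (m + 1))^2 =
            ((N : ℤ) - (c m)^2) + (c m - c (m + 1)) * (c m + c (m + 1)) := by ring
        have hsum : c m + c (m + 1) = a (m + 1) * r m := by rw [hc m]; ring
        rw [key, hsum]
        exact dvd_add hdvd ⟨(c m - c (m + 1)) * a (m + 1), by ring⟩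
      have hr1 : r (m + 1) * r m = (N : ℤ) - (c (m + 1))^2 := by
        rw [hr m, Int.fdiv_eq_ediv_of_nonneg _ hrm_pos.le]
        exact Int.ediv_mul_cancel hdvd'
      have hr1pos : 0 < r (m + 1) := by
        by_contra hcon
        push_neg at hcon
        have hnp : r (m + 1) * r m ≤ 0 :=
          mul_nonpos_of_nonpos_of_nonneg hcon hrm_pos.le
        linarith [hr1, hpos]
      have e1 : r (m + 1) * r m = (N : ℤ) - (a 0 - s)^2 := by
        rw [hr1, hcm1]
      have h5' : s < r (m + 1) := by
        have hp : 0 ≤ s * (2 * a 0 - s - r m) :=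
          mul_nonneg hs0 (by linarith)
        have expand : (N : ℤ) - (a 0 - s)^2 - s * r m =
            ((N : ℤ) - (a 0)^2) + s * (2 * a 0 - s - r m) := by ring
        have key : s * r m < r (m + 1) * r m := by linarith [e1, ha0N, hp, expand]
        exact lt_of_mul_lt_mul_right key hrm_pos.le
      have h6' : r (m + 1) ≤ 2 * a 0 - s := by
        have hp2 : 0 ≤ (2 * a 0 - s + 1) * (r m - s - 1) :=
          mul_nonneg (by linarith) (by linarith)
        have expand2 : (2 * a 0 - s + 1) * r m - ((N : ℤ) - (a 0 - s)^2) =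
            (2 * a 0 - s + 1) * (r m - s - 1) + ((a 0)^2 + 2 * a 0 + 1 - (N : ℤ)) := by
          ring
        have key : r (m + 1) * r m < (2 * a 0 - s + 1) * r m := by
          linarith [e1, hNa0, hp2, expand2]
        have hfin := lt_of_mul_lt_mul_right key hrm_pos.le
        linarith
      have hc1pos : 0 < c (m + 1) := by rw [hcm1]; linarith
      refine ⟨hc1pos, hcm1_ub, hr1pos, ⟨r m, hr1.symm⟩, ?_, ?_⟩
      · rw [hcm1]; linarith
      · rw [hcm1]; linarith
  intro n hn
  obtain ⟨m, rfl⟩ : ∃ m, n = m + 1 := ⟨n - 1, by omega⟩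
  obtain ⟨hcm_pos, hcm_le, hrm_pos, hdvd, h5, h6⟩ := I m
  obtain ⟨hc1_pos, hc1_le, hr1_pos, hdvd1, h5', h6'⟩ := I (m + 1)
  refine ⟨h5', by linarith, hc1_le, ?_⟩
  have hqdef : a (m + 1) = (a 0 + c m) / r m := by
    rw [ha m, Int.fdiv_eq_ediv_of_nonneg _ hrm_pos.le]
  have h1 : a (m + 1) ≤ a 0 + c m := by
    rw [hqdef]
    exact Int.ediv_le_self _ (by linarith)
  linarith
end

section
/- If r_n = 1 in the continued fraction expansion of √N (with complete quotients (√N + c_n)/r_n), then a_{n+1} = 2·a_0, where a_0 = ⌊√N⌋. -/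
set_option maxHeartbeats 1600000 in
theorem stmt_7
(N : ℕ) (hN : 0 < N) (hns : ¬ IsSquare N)
    (a c r : ℕ → ℤ)
    (ha0 : a 0 = (Nat.sqrt N : ℤ)) (hc0 : c 0 = a 0) (hr0 : r 0 = (N : ℤ) - a 0 ^ 2)
    (ha : ∀ m, a (m + 1) = (a 0 + c m).fdiv (r m))
    (hc : ∀ m, c (m + 1) = a (m + 1) * r m - c m)
    (hr : ∀ m, r (m + 1) = ((N : ℤ) - c (m + 1) ^ 2).fdiv (r m)) :
    ∀ n, r n = 1 → a (n + 1) = 2 * a 0 := by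
  set A : ℤ := (Nat.sqrt N : ℤ) with hA
  have hA0 : 0 ≤ A := by positivity
  have hAsq : A ^ 2 < (N : ℤ) := by
    have h1 : Nat.sqrt N * Nat.sqrt N ≤ N := Nat.sqrt_le N
    have h2 : Nat.sqrt N * Nat.sqrt N ≠ N := fun h => hns ⟨_, h.symm⟩
    have h3 : Nat.sqrt N * Nat.sqrt N < N := lt_of_le_of_ne h1 h2
    have : (Nat.sqrt N * Nat.sqrt N : ℤ) < (N : ℤ) := by exact_mod_cast h3
    nlinarith [this]
  have hAub : (N : ℤ) < (A + 1) ^ 2 := by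
    have h3 := Nat.lt_succ_sqrt N
    have : (N : ℤ) < ((Nat.sqrt N + 1) * (Nat.sqrt N + 1) : ℕ) := by exact_mod_cast h3
    push_cast at this
    nlinarith [this]
  have inv : ∀ m, 0 < r m ∧ 0 ≤ c m ∧ c m ≤ A ∧ A < c m + r m ∧ r m ≤ A + c m ∧
      r m ∣ ((N : ℤ) - c m ^ 2) := by
    intro m
    induction m with
    | zero =>
      rw [hr0, hc0, ha0]
      refine ⟨by linarith, hA0, le_refl _, by linarith, by nlinarith, dvd_refl _⟩
    | succ m ih =>
      obtain ⟨hrm, hcm0, hcmA, hcmr, hrmle, hdvd⟩ := ih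
      -- fdiv facts for a (m+1)
      have hfd : a (m + 1) = (A + c m) / r m := by
        rw [ha m, ha0, Int.fdiv_eq_ediv_of_nonneg _ (le_of_lt hrm)]
      have hde := Int.mul_ediv_add_emod (A + c m) (r m)
      have hm0 := Int.emod_nonneg (A + c m) (ne_of_gt hrm)
      have hm1 := Int.emod_lt_of_pos (A + c m) hrm
      have hq1 : a (m + 1) * r m ≤ A + c m := by
        rw [hfd]; nlinarith [hde, hm0]
      have hq2 : A + c m < a (m + 1) * r m + r m := by
        rw [hfd]; nlinarith [hde, hm1]
      -- a(m+1) ≥ 1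
      have hqpos : 1 ≤ a (m + 1) := by
        by_contra h
        push_neg at h
        have h0 : a (m + 1) ≤ 0 := by omega
        have : a (m + 1) * r m ≤ 0 := mul_nonpos_of_nonpos_of_nonneg h0 (le_of_lt hrm)
        linarith
      have hc1 : c (m + 1) = a (m + 1) * r m - c m := hc m
      have hc1le : c (m + 1) ≤ A := by rw [hc1]; linarith
      have hc1lb : A < c (m + 1) + r m := by rw [hc1]; linarith
      have hc1ge : r m - c m ≤ c (m + 1) := by
        rw [hc1]
        nlinarith [mul_le_mul_of_nonneg_right hqpos (le_of_lt hrm)]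
      have hc1nn : 0 ≤ c (m + 1) := by
        -- 2 * c(m+1) > A - c m ≥ 0
        have h2c : A - c m < 2 * c (m + 1) := by linarith
        omega
      -- r m ≤ A + c (m+1)
      have hrm_le : r m ≤ A + c (m + 1) := by linarith
      -- divisibility of N - c(m+1)^2 by r m
      have hdvd1 : r m ∣ ((N : ℤ) - c (m + 1) ^ 2) := by
        have heq : (N : ℤ) - c (m + 1) ^ 2 =
            ((N : ℤ) - c m ^ 2) + (c m - c (m + 1)) * (a (m + 1) * r m) := by
          rw [hc1]; ring
        rw [heq]
        exact dvd_add hdvd ⟨(c m - c (m + 1)) * a (m + 1), by ring⟩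
      have hpos1 : 0 < (N : ℤ) - c (m + 1) ^ 2 := by nlinarith
      have hprod : r (m + 1) * r m = (N : ℤ) - c (m + 1) ^ 2 := by
        rw [hr m, Int.fdiv_eq_ediv_of_nonneg _ (le_of_lt hrm)]
        exact Int.ediv_mul_cancel hdvd1
      have hr1pos : 0 < r (m + 1) := by
        by_contra h
        push_neg at h
        have : r (m + 1) * r m ≤ 0 := mul_nonpos_of_nonpos_of_nonneg h (le_of_lt hrm)
        linarith
      have hlb : A < c (m + 1) + r (m + 1) := by
        have h1 : (A - c (m + 1)) * r m ≤ (A - c (m + 1)) * (A + c (m + 1)) :=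
          mul_le_mul_of_nonneg_left hrm_le (sub_nonneg.mpr hc1le)
        have hid : (A - c (m + 1)) * (A + c (m + 1)) = A ^ 2 - c (m + 1) ^ 2 := by ring
        have h3 : (A - c (m + 1)) * r m < r (m + 1) * r m := by
          rw [hprod]; linarith
        have h4 := lt_of_mul_lt_mul_right h3 (le_of_lt hrm)
        linarith
      have hub : r (m + 1) ≤ A + c (m + 1) := by
        have hsum : A + 1 ≤ c (m + 1) + r m := by linarith
        have hsq : (A + 1) ^ 2 ≤ (c (m + 1) + r m) ^ 2 :=
          pow_le_pow_left₀ (by linarith) hsum 2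
        have hid1 : (c (m + 1) + r m) ^ 2 - c (m + 1) ^ 2 = (r m + 2 * c (m + 1)) * r m := by
          ring
        have h5 : r (m + 1) * r m < (r m + 2 * c (m + 1)) * r m := by
          rw [hprod]; linarith
        have hstep := lt_of_mul_lt_mul_right h5 (le_of_lt hrm)
        -- (r(m+1) - c(m+1))^2 < N
        have h6 : r (m + 1) * (r (m + 1) - 2 * c (m + 1)) < r (m + 1) * r m :=
          mul_lt_mul_of_pos_left (by linarith) hr1pos
        have hid2 : (r (m + 1) - c (m + 1)) ^ 2 =
            r (m + 1) * (r (m + 1) - 2 * c (m + 1)) + c (m + 1) ^ 2 := by ring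
        have ht2 : (r (m + 1) - c (m + 1)) ^ 2 < (N : ℤ) := by
          rw [hid2]; linarith [hprod]
        by_contra hcon
        push_neg at hcon
        have h7 : A + 1 ≤ r (m + 1) - c (m + 1) := by linarith
        have h8 : (A + 1) ^ 2 ≤ (r (m + 1) - c (m + 1)) ^ 2 :=
          pow_le_pow_left₀ (by linarith) h7 2
        linarith
      exact ⟨hr1pos, hc1nn, hc1le, hlb, hub, Dvd.intro _ hprod⟩
  intro n hrn
  obtain ⟨_, _, hcle, hlt, _, _⟩ := inv n
  have hcA : c n = A := by rw [hrn] at hlt; omega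
  rw [ha n, hcA, hrn, Int.fdiv_one, ha0]
  ring
end

section
/- If N is a squarefree positive integer such that the Pell equation x² - N·y² = -1 has an integer solution, then N is a sum of two squares. -/
theorem stmt_9 (N : ℕ) (hN : 0 < N) (hsf : Squarefree N)
    (x y : ℤ) (hxy : x ^ 2 - (N : ℤ) * y ^ 2 = -1) :
    ∃ a b : ℕ, N = a ^ 2 + b ^ 2 := by
  have h : IsSquare (-1 : ZMod N) := by
    refine ⟨(x : ZMod N), ?_⟩
    have := congrArg (Int.cast : ℤ → ZMod N) hxy
    push_cast at this
    rw [ZMod.natCast_self] at this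
    ring_nf at this ⊢
    linear_combination -this
  exact Nat.eq_sq_add_sq_of_isSquare_mod_neg_one h
end

section
/- The sequences Δ_m = A_m² - N·B_m² and Ω_m = A_m·A_{m-1} - N·B_m·B_{m-1} are periodic (for m ≥ 1) with period τ if the period τ of the continued fraction of √N is even, and with period 2τ if τ is odd. -/
theorem stmt_11
(N : ℕ) (hN : 0 < N) (hns : ¬ IsSquare N)
    (a c r : ℕ → ℤ)
    (ha0 : a 0 = (Nat.sqrt N : ℤ)) (hc0 : c 0 = a 0) (hr0 : r 0 = (N : ℤ) - a 0 ^ 2)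
    (ha : ∀ m, a (m + 1) = (a 0 + c m).fdiv (r m))
    (hc : ∀ m, c (m + 1) = a (m + 1) * r m - c m)
    (hr : ∀ m, r (m + 1) = ((N : ℤ) - c (m + 1) ^ 2).fdiv (r m))
(A B : ℕ → ℤ)
    (hA0 : A 0 = a 0) (hB0 : B 0 = 1)
    (hA1 : A 1 = a 1 * a 0 + 1) (hB1 : B 1 = a 1)
    (hArec : ∀ n, A (n + 2) = a (n + 2) * A (n + 1) + A n)
    (hBrec : ∀ n, B (n + 2) = a (n + 2) * B (n + 1) + B n)
(Δ Ω : ℕ → ℤ)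
    (hΔ : ∀ m, Δ m = A m ^ 2 - (N : ℤ) * B m ^ 2)
    (hΩ : ∀ m, 1 ≤ m → Ω m = A m * A (m - 1) - (N : ℤ) * B m * B (m - 1))
(τ : ℕ) (hτpos : 0 < τ)
    (hper : ∀ n, 1 ≤ n → a (n + τ) = a n ∧ c (n + τ) = c n ∧ r (n + τ) = r n)
    (hmin : ∀ t, 0 < t →
      (∀ n, 1 ≤ n → a (n + t) = a n ∧ c (n + t) = c n ∧ r (n + t) = r n) → τ ≤ t) :
    (Even τ → ∀ m, 1 ≤ m → Δ (m + τ) = Δ m ∧ Ω (m + τ) = Ω m) ∧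
    (Odd τ → ∀ m, 1 ≤ m → Δ (m + 2 * τ) = Δ m ∧ Ω (m + 2 * τ) = Ω m) := by
  -- r 0 ≠ 0
  have hsq : (Nat.sqrt N : ℤ) ^ 2 < (N : ℤ) := by
    have h1 : Nat.sqrt N ^ 2 < N := by
      rcases lt_or_eq_of_le (Nat.sqrt_le' N) with h | h
      · exact h
      · exact absurd ⟨Nat.sqrt N, by rw [sq] at h; exact h.symm⟩ hns
    exact_mod_cast h1
  have hr0ne : r 0 ≠ 0 := by
    rw [hr0, ha0]; nlinarith
  -- determinant identity
  have hdet : ∀ n, A (n + 1) * B n - A n * B (n + 1) = (-1 : ℤ) ^ n := by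
    intro n
    induction n with
    | zero => rw [hA1, hB1, hA0, hB0]; ring
    | succ k ih =>
      calc A (k + 2) * B (k + 1) - A (k + 1) * B (k + 2)
          = -(A (k + 1) * B k - A k * B (k + 1)) := by rw [hArec k, hBrec k]; ring
        _ = (-1 : ℤ) ^ (k + 1) := by rw [ih]; ring
  -- Δ never vanishes
  have hΔne : ∀ m, A m ^ 2 - (N : ℤ) * B m ^ 2 ≠ 0 := by
    intro m h
    have hd := hdet m
    have heq : A m ^ 2 = (N : ℤ) * B m ^ 2 := by linarith
    by_cases hB : B m = 0
    · rw [hB] at heq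
      have hA : A m = 0 := by
        have : A m ^ 2 = 0 := by rw [heq]; ring
        exact pow_eq_zero_iff two_ne_zero |>.mp this
      rw [hA, hB] at hd
      simp at hd
      exact absurd hd.symm (pow_ne_zero m (by norm_num))
    · set x := (A m).natAbs with hx
      set y := (B m).natAbs with hy
      have hxyN : x ^ 2 = N * y ^ 2 := by
        have h2 := congrArg Int.natAbs heq
        rwa [Int.natAbs_pow, Int.natAbs_mul, Int.natAbs_pow, Int.natAbs_natCast] at h2
      have hyne : y ≠ 0 := fun h0 => hB (Int.natAbs_eq_zero.mp h0)
      have hdvd : y ∣ x := by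
        have : y ^ 2 ∣ x ^ 2 := ⟨N, by rw [hxyN]; ring⟩
        exact (Nat.pow_dvd_pow_iff two_ne_zero).mp this
      obtain ⟨k, hk⟩ := hdvd
      apply hns
      refine ⟨k, ?_⟩
      have : N * y ^ 2 = (k * k) * y ^ 2 := by rw [← hxyN, hk]; ring
      have hy2 : y ^ 2 ≠ 0 := pow_ne_zero 2 hyne
      exact Nat.eq_of_mul_eq_mul_right (Nat.pos_of_ne_zero hy2) this
  -- the key closed forms
  have key : ∀ m, 1 ≤ m → Δ m = (-1 : ℤ) ^ (m + 1) * r m ∧ Ω m = (-1 : ℤ) ^ m * c m := by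
    intro m hm
    induction m with
    | zero => omega
    | succ k ih =>
      rcases Nat.eq_zero_or_pos k with hk | hk
      · subst hk
        constructor
        · -- Δ 1 = (-1)^2 * r 1
          have hd1 : (N : ℤ) - c 1 ^ 2 = r 0 * Δ 1 := by
            rw [hc 0, hc0, hr0, hΔ 1, hA1, hB1]; ring
          have : r 1 = Δ 1 := by
            rw [hr 0, hd1, Int.mul_fdiv_cancel_left _ hr0ne]
          rw [this]; ring
        · -- Ω 1 = (-1)^1 * c 1
          have h1 := hΩ 1 le_rfl
          simp only [Nat.sub_self] at h1
          rw [h1, hA1, hB1, hA0, hB0, hc 0, hc0, hr0]; ring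
      · obtain ⟨j, rfl⟩ : ∃ j, k = j + 1 := ⟨k - 1, by omega⟩
        obtain ⟨hΔk, hΩk⟩ := ih (by omega)
        set s : ℤ := (-1 : ℤ) ^ (j + 1) with hs
        have hs2 : s ^ 2 = 1 := by
          rw [hs, ← pow_mul]
          exact Even.neg_one_pow ⟨j + 1, by ring⟩
        -- Ω (j+2) = a (j+2) * Δ (j+1) + Ω (j+1)
        have hΩ2 : Ω (j + 2) = a (j + 2) * Δ (j + 1) + Ω (j + 1) := by
          have e1 := hΩ (j + 2) (by omega)
          have e2 := hΩ (j + 1) (by omega)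
          simp only [show j + 2 - 1 = j + 1 from rfl, Nat.add_sub_cancel] at e1 e2
          rw [e1, e2, hΔ (j + 1), hArec j, hBrec j]; ring
        have hΩval : Ω (j + 2) = (-1 : ℤ) ^ (j + 2) * c (j + 2) := by
          rw [hΩ2, hΔk, hΩk, hc (j + 1)]; ring
        constructor
        · -- Δ (j+2)
          have hdj := hdet (j + 1)
          have hid : Δ (j + 2) * Δ (j + 1) = Ω (j + 2) ^ 2 - (N : ℤ) * s ^ 2 := by
            have e1 := hΩ (j + 2) (by omega)
            simp only [show j + 2 - 1 = j + 1 from rfl] at e1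
            calc Δ (j + 2) * Δ (j + 1)
                = (A (j + 2) * A (j + 1) - (N : ℤ) * B (j + 2) * B (j + 1)) ^ 2
                  - (N : ℤ) * (A (j + 2) * B (j + 1) - A (j + 1) * B (j + 2)) ^ 2 := by
                  rw [hΔ (j + 2), hΔ (j + 1)]; ring
              _ = Ω (j + 2) ^ 2 - (N : ℤ) * s ^ 2 := by rw [hdj, e1, hs]
          rw [hs2, mul_one] at hid
          have hΩsq : Ω (j + 2) ^ 2 = c (j + 2) ^ 2 := by
            rw [hΩval, mul_pow, ← pow_mul]
            rw [Even.neg_one_pow ⟨j + 2, by ring⟩, one_mul]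
          have hrne : r (j + 1) ≠ 0 := by
            intro h0
            have := hΔk
            rw [h0, mul_zero, hΔ (j + 1)] at this
            exact hΔne (j + 1) this
          -- N - c (j+2)^2 = r (j+1) * (s * Δ (j+2))
          have hΔ1s : Δ (j + 1) = -s * r (j + 1) := by rw [hΔk, hs]; ring
          have hfac : (N : ℤ) - c (j + 2) ^ 2 = r (j + 1) * (s * Δ (j + 2)) := by
            linear_combination hid + hΩsq - Δ (j + 2) * hΔ1s
          have hr2 : r (j + 2) = s * Δ (j + 2) := by
            rw [hr (j + 1), hfac, Int.mul_fdiv_cancel_left _ hrne]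
          have : Δ (j + 2) = s * r (j + 2) := by
            linear_combination (-s) * hr2 - Δ (j + 2) * hs2
          rw [this, hs]; ring
        · exact hΩval
  -- general periodicity with an even shift
  have final : ∀ t, Even t →
      (∀ n, 1 ≤ n → a (n + t) = a n ∧ c (n + t) = c n ∧ r (n + t) = r n) →
      ∀ m, 1 ≤ m → Δ (m + t) = Δ m ∧ Ω (m + t) = Ω m := by
    intro t ht hp m hm
    obtain ⟨hΔm, hΩm⟩ := key m hm
    obtain ⟨hΔmt, hΩmt⟩ := key (m + t) (by omega)
    obtain ⟨_, hcp, hrp⟩ := hp m hm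
    have hpow : (-1 : ℤ) ^ (m + t) = (-1 : ℤ) ^ m := by
      rw [pow_add, Even.neg_one_pow ht, mul_one]
    constructor
    · rw [hΔmt, hΔm, hrp]
      have : (-1 : ℤ) ^ (m + t + 1) = (-1 : ℤ) ^ (m + 1) := by
        rw [pow_add, pow_add, pow_add, Even.neg_one_pow ht]; ring
      rw [this]
    · rw [hΩmt, hΩm, hcp, hpow]
  refine ⟨fun hev => final τ hev hper, fun _ => final (2 * τ) (even_two_mul τ) ?_⟩
  intro n hn
  have h1 := hper n hn
  have h2 := hper (n + τ) (by omega)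
  have e : n + 2 * τ = n + τ + τ := by ring
  rw [e]
  exact ⟨h2.1.trans h1.1, h2.2.1.trans h1.2.1, h2.2.2.trans h1.2.2⟩
end

section
/- If the period τ of the continued fraction of √N is even, then Ω_{τ-1} = -a_0, Ω_τ = a_0, and Δ_τ = Δ_{τ-2}, where a_0 = ⌊√N⌋. -/
theorem stmt_13
(N : ℕ) (hN : 0 < N) (hns : ¬ IsSquare N)
    (a c r : ℕ → ℤ)
    (ha0 : a 0 = (Nat.sqrt N : ℤ)) (hc0 : c 0 = a 0) (hr0 : r 0 = (N : ℤ) - a 0 ^ 2)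
    (ha : ∀ m, a (m + 1) = (a 0 + c m).fdiv (r m))
    (hc : ∀ m, c (m + 1) = a (m + 1) * r m - c m)
    (hr : ∀ m, r (m + 1) = ((N : ℤ) - c (m + 1) ^ 2).fdiv (r m))
(A B : ℕ → ℤ)
    (hA0 : A 0 = a 0) (hB0 : B 0 = 1)
    (hA1 : A 1 = a 1 * a 0 + 1) (hB1 : B 1 = a 1)
    (hArec : ∀ n, A (n + 2) = a (n + 2) * A (n + 1) + A n)
    (hBrec : ∀ n, B (n + 2) = a (n + 2) * B (n + 1) + B n)
(Δ Ω : ℕ → ℤ)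
    (hΔ : ∀ m, Δ m = A m ^ 2 - (N : ℤ) * B m ^ 2)
    (hΩ : ∀ m, 1 ≤ m → Ω m = A m * A (m - 1) - (N : ℤ) * B m * B (m - 1))
(τ : ℕ) (hτpos : 0 < τ)
    (hper : ∀ n, 1 ≤ n → a (n + τ) = a n ∧ c (n + τ) = c n ∧ r (n + τ) = r n)
    (hmin : ∀ t, 0 < t →
      (∀ n, 1 ≤ n → a (n + t) = a n ∧ c (n + t) = c n ∧ r (n + t) = r n) → τ ≤ t)
    (heven : Even τ) :
    Ω (τ - 1) = -(a 0) ∧ Ω τ = a 0 ∧ Δ τ = Δ (τ - 2) := by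
  -- basic numeric facts
  have hsqle : (Nat.sqrt N) ^ 2 ≤ N := Nat.sqrt_le' N
  have hsqne : (Nat.sqrt N) ^ 2 ≠ N := by
    intro h
    exact hns ⟨Nat.sqrt N, by rw [← pow_two]; exact h.symm⟩
  have hNgt : (a 0) ^ 2 < (N : ℤ) := by
    rw [ha0]
    exact_mod_cast lt_of_le_of_ne hsqle hsqne
  have hNlt : (N : ℤ) < (a 0 + 1) ^ 2 := by
    rw [ha0]
    exact_mod_cast Nat.lt_succ_sqrt' N
  have ha0pos : 1 ≤ a 0 := by
    rw [ha0]
    exact_mod_cast Nat.sqrt_pos.mpr hN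
  -- the step lemma for the invariant
  have step : ∀ m, (1 ≤ r m ∧ c m ≤ a 0 ∧ a 0 + 1 ≤ c m + r m ∧ r m ≤ a 0 + c m ∧
      r m ∣ ((N : ℤ) - c m ^ 2)) →
      (1 ≤ a (m + 1) ∧ r m * r (m + 1) = (N : ℤ) - c (m + 1) ^ 2 ∧
       (1 ≤ r (m + 1) ∧ c (m + 1) ≤ a 0 ∧ a 0 + 1 ≤ c (m + 1) + r (m + 1) ∧
        r (m + 1) ≤ a 0 + c (m + 1) ∧ r (m + 1) ∣ ((N : ℤ) - c (m + 1) ^ 2))) := by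
    rintro m ⟨h1, h2, h3, h4, h5⟩
    have hrpos : (0 : ℤ) < r m := h1
    have hqdef : a (m + 1) = (a 0 + c m) / r m := by
      rw [ha m, Int.fdiv_eq_ediv_of_nonneg _ hrpos.le]
    have hdm := Int.mul_ediv_add_emod (a 0 + c m) (r m)
    have hm0 := Int.emod_nonneg (a 0 + c m) hrpos.ne'
    have hm1 := Int.emod_lt_of_pos (a 0 + c m) hrpos
    have hub : r m * a (m + 1) ≤ a 0 + c m := by rw [hqdef]; linarith
    have hlb : a 0 + c m < r m * a (m + 1) + r m := by rw [hqdef]; linarith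
    have hapos : 1 ≤ a (m + 1) := by
      by_contra hq
      push_neg at hq
      have hle : a (m + 1) ≤ 0 := by omega
      have : r m * a (m + 1) ≤ 0 := mul_nonpos_of_nonneg_of_nonpos hrpos.le hle
      linarith
    have hc1 := hc m
    have hc1' : c (m + 1) = r m * a (m + 1) - c m := by rw [hc1]; ring
    have hcub : c (m + 1) ≤ a 0 := by linarith
    have hcrm : a 0 + 1 ≤ c (m + 1) + r m := by
      have h' : a 0 < c (m + 1) + r m := by linarith
      linarith [Int.lt_iff_add_one_le.mp h']
    have hclb : 1 - a 0 ≤ c (m + 1) := by linarith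
    have hcsq : c (m + 1) ^ 2 ≤ a 0 ^ 2 := sq_le_sq' (by linarith) hcub
    have hdvd : r m ∣ ((N : ℤ) - c (m + 1) ^ 2) := by
      have heq : (N : ℤ) - c (m + 1) ^ 2 =
          ((N : ℤ) - c m ^ 2) + (c m - c (m + 1)) * a (m + 1) * r m := by
        rw [hc1]; ring
      rw [heq]
      exact dvd_add h5 (Dvd.intro_left _ rfl)
    have hprod : r m * r (m + 1) = (N : ℤ) - c (m + 1) ^ 2 := by
      rw [hr m, Int.fdiv_eq_ediv_of_nonneg _ hrpos.le]
      exact Int.mul_ediv_cancel' hdvd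
    have hrpos1 : 1 ≤ r (m + 1) := by
      by_contra hh
      push_neg at hh
      have hle : r (m + 1) ≤ 0 := by omega
      have h6 : r m * r (m + 1) ≤ 0 := mul_nonpos_of_nonneg_of_nonpos hrpos.le hle
      linarith [h6, hprod, hcsq, hNgt]
    have hrmub : r m ≤ a 0 + c (m + 1) := by
      have h6 : r m * 1 ≤ r m * a (m + 1) := mul_le_mul_of_nonneg_left hapos hrpos.le
      linarith
    have hrub1 : r (m + 1) ≤ a 0 + c (m + 1) := by
      by_contra hh
      push_neg at hh
      have h6 : a 0 + 1 - c (m + 1) ≤ r m := by linarith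
      have h7 : a 0 + 1 + c (m + 1) ≤ r (m + 1) := by
        linarith [Int.lt_iff_add_one_le.mp hh]
      have hmm := mul_le_mul h6 h7 (by linarith) hrpos.le
      have hexp : (a 0 + 1 - c (m + 1)) * (a 0 + 1 + c (m + 1)) =
          (a 0 + 1) ^ 2 - c (m + 1) ^ 2 := by ring
      linarith [hmm, hexp, hprod, hNlt]
    have hcradd : a 0 + 1 ≤ c (m + 1) + r (m + 1) := by
      by_contra hh
      push_neg at hh
      have h7 : r (m + 1) ≤ a 0 - c (m + 1) := by
        linarith [Int.lt_iff_add_one_le.mp hh]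
      have hmm := mul_le_mul hrmub h7 (by linarith) (by linarith)
      have hexp : (a 0 + c (m + 1)) * (a 0 - c (m + 1)) = a 0 ^ 2 - c (m + 1) ^ 2 := by ring
      linarith [hmm, hexp, hprod, hNgt]
    exact ⟨hapos, hprod, hrpos1, hcub, hcradd, hrub1, ⟨r m, by rw [← hprod]; ring⟩⟩
  -- the invariant holds for all m
  have key : ∀ m, (1 ≤ r m ∧ c m ≤ a 0 ∧ a 0 + 1 ≤ c m + r m ∧ r m ≤ a 0 + c m ∧
      r m ∣ ((N : ℤ) - c m ^ 2)) := by
    intro m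
    induction m with
    | zero =>
      refine ⟨by rw [hr0]; linarith, le_of_eq hc0, by rw [hc0, hr0]; linarith, ?_, ?_⟩
      · rw [hc0, hr0]
        have hexp : (a 0 + 1) ^ 2 = a 0 ^ 2 + 2 * a 0 + 1 := by ring
        linarith
      · rw [hc0, ← hr0]
    | succ m ih => exact (step m ih).2.2
  have prod : ∀ m, r m * r (m + 1) = (N : ℤ) - c (m + 1) ^ 2 := fun m => (step m (key m)).2.1
  have rne : ∀ m, r m ≠ 0 := by
    intro m h
    have := (key m).1
    rw [h] at this
    norm_num at this
  -- the formulas for Δ and Ω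
  have T : ∀ m,
      (A m ^ 2 - (N : ℤ) * B m ^ 2 = (-1 : ℤ) ^ (m + 1) * r m) ∧
      (A (m + 1) * A m - (N : ℤ) * B (m + 1) * B m = (-1 : ℤ) ^ (m + 1) * c (m + 1)) ∧
      (A (m + 1) ^ 2 - (N : ℤ) * B (m + 1) ^ 2 = (-1 : ℤ) ^ (m + 2) * r (m + 1)) := by
    intro m
    induction m with
    | zero =>
      have hcc := hc 0
      refine ⟨by rw [hA0, hB0, hr0]; ring, ?_, ?_⟩
      · rw [hA1, hB1, hA0, hB0, hcc, hc0, hr0]; ring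
      · have hp := prod 0
        apply mul_left_cancel₀ (rne 0)
        rw [hA1, hB1, hr0]
        rw [hcc, hc0, hr0] at hp
        linear_combination -hp
    | succ m ih =>
      obtain ⟨hD, hO, hD1⟩ := ih
      have hO1 : A (m + 2) * A (m + 1) - (N : ℤ) * B (m + 2) * B (m + 1) =
          (-1 : ℤ) ^ (m + 2) * c (m + 2) := by
        rw [hArec m, hBrec m, hc (m + 1)]
        simp only [pow_succ] at hD1 hO ⊢
        linear_combination (a (m + 2)) * hD1 + hO
      have hrrel : r (m + 1) * r (m + 2) =
          r (m + 1) * (r m + 2 * a (m + 2) * c (m + 1) - a (m + 2) ^ 2 * r (m + 1)) := by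
        have h2 := prod (m + 1)
        rw [hc (m + 1)] at h2
        linear_combination h2 - prod m
      have hrrel' := mul_left_cancel₀ (rne (m + 1)) hrrel
      have hD2 : A (m + 2) ^ 2 - (N : ℤ) * B (m + 2) ^ 2 =
          (-1 : ℤ) ^ (m + 3) * r (m + 2) := by
        rw [hArec m, hBrec m, hrrel']
        simp only [pow_succ] at hD hO hD1 ⊢
        linear_combination (a (m + 2)) ^ 2 * hD1 + 2 * (a (m + 2)) * hO + hD
      exact ⟨hD1, hO1, hD2⟩
  -- use periodicity
  obtain ⟨k, hk⟩ := heven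
  obtain ⟨j, hj⟩ : ∃ j, τ = j + 2 := ⟨τ - 2, by omega⟩
  subst hj
  have hevenj : Even j := ⟨k - 1, by omega⟩
  have hper1 := hper 1 le_rfl
  have haτ : a (j + 2 + 1) = a 1 := by
    rw [show j + 2 + 1 = 1 + (j + 2) from by omega]; exact hper1.1
  have hcτ : c (j + 2 + 1) = c 1 := by
    rw [show j + 2 + 1 = 1 + (j + 2) from by omega]; exact hper1.2.1
  have hrτ : r (j + 2 + 1) = r 1 := by
    rw [show j + 2 + 1 = 1 + (j + 2) from by omega]; exact hper1.2.2
  have hrτ0 : r (j + 2) = r 0 := by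
    have h1 := prod (j + 2)
    rw [hcτ, hrτ] at h1
    exact mul_right_cancel₀ (rne 1) (h1.trans (prod 0).symm)
  have hca : c (j + 2) = a 0 := by
    have h1 := hc (j + 2)
    rw [hcτ, haτ, hrτ0] at h1
    have h2 := hc 0
    rw [hc0] at h2
    linarith
  have hrj1 : r (j + 1) = 1 := by
    have h := prod (j + 1)
    rw [show j + 1 + 1 = j + 2 from rfl] at h
    rw [hca, hrτ0, ← hr0] at h
    exact mul_right_cancel₀ (rne 0) (h.trans (one_mul (r 0)).symm)
  have hcj1 : c (j + 1) = a 0 := by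
    have hS := key (j + 1)
    have h1 : a 0 + 1 ≤ c (j + 1) + r (j + 1) := hS.2.2.1
    rw [hrj1] at h1
    exact le_antisymm hS.2.1 (by linarith)
  have hrj : r j = r 0 := by
    have h := prod j
    rw [hrj1, hcj1, mul_one, ← hr0] at h
    exact h
  -- signs
  have hs0 : (-1 : ℤ) ^ j = 1 := hevenj.neg_one_pow
  have hs1 : (-1 : ℤ) ^ (j + 1) = -1 := by rw [pow_succ, hs0, one_mul]
  have hs2 : (-1 : ℤ) ^ (j + 2) = 1 := by rw [pow_succ, hs1]; norm_num
  have hs3 : (-1 : ℤ) ^ (j + 3) = -1 := by rw [pow_succ, hs2, one_mul]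
  refine ⟨?_, ?_, ?_⟩
  · show Ω (j + 1) = -(a 0)
    have hω := hΩ (j + 1) (by omega)
    rw [show j + 1 - 1 = j from rfl] at hω
    rw [hω, (T j).2.1, hcj1, hs1]
    ring
  · have hω := hΩ (j + 2) (by omega)
    rw [show j + 2 - 1 = j + 1 from rfl] at hω
    have h := (T (j + 1)).2.1
    rw [show j + 1 + 1 = j + 2 from rfl] at h
    rw [hω, h, hca, hs2, one_mul]
  · show Δ (j + 2) = Δ j
    rw [hΔ (j + 2), hΔ j]
    have h1 := (T (j + 1)).2.2
    rw [show j + 1 + 1 = j + 2 from rfl, show j + 1 + 2 = j + 3 from rfl] at h1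
    rw [h1, (T j).1, hs3, hs1, hrτ0, hrj]
end
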